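/- Let Φ(x) := (2π)^{−1/2} ∫_{−∞}^{x} e^{−v²/2} dv denote the standard normal cumulative distribution function. Let Y ∈ (1, 2), A > 0, t₀ > 0, and let c, σ̂ : (0, t₀) → (0, ∞) be such that c(t) = Φ(σ̂(t)√t / 2) − Φ(−σ̂(t)√t / 2) for all t ∈ (0, t₀) (i.e. c(t) is the normalized at-the-money Black–Scholes call price with volatility σ̂(t)), and c(t)/t^{1/Y} → A as t → 0+. Then lim_{t → 0+} σ̂(t) · t^{1/2 − 1/Y} = √(2π) · A. (The at-the-money implied volatility asymptotics of Proposition 4.4: if the at-the-money call price is asymptotic to A t^{1/Y}, then σ̂_t(0) ~ √(2π) A t^{1/Y − 1/2}.) -/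

import Mathlib

open Filter Topology MeasureTheory

/-- The standard normal cumulative distribution function
`Φ(x) = (2π)^{−1/2} ∫_{−∞}^{x} e^{−v²/2} dv`. -/
noncomputable def stdNormalCdf (x : ℝ) : ℝ :=
  (2 * Real.pi) ^ (-(1 : ℝ) / 2) * ∫ v in Set.Iic x, Real.exp (-v ^ 2 / 2)

namespace ATMaux

noncomputable def gf (v : ℝ) : ℝ := Real.exp (-v ^ 2 / 2)

lemma gf_pos (v : ℝ) : 0 < gf v := Real.exp_pos _

lemma gf_cont : Continuous gf := by
  unfold gf; fun_prop

lemma gf_int : MeasureTheory.Integrable gf := by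
  have h := integrable_exp_neg_mul_sq (by norm_num : (0:ℝ) < 1/2)
  have he : gf = fun v : ℝ => Real.exp (-(1/2) * v ^ 2) := by
    funext v; unfold gf; ring_nf
  rw [he]; exact h

/-- `F x = Φ(x) − Φ(−x)`. -/
noncomputable def F (x : ℝ) : ℝ := stdNormalCdf x - stdNormalCdf (-x)

noncomputable def C : ℝ := (2 * Real.pi) ^ (-(1 : ℝ) / 2)

lemma C_pos : 0 < C :=
  Real.rpow_pos_of_pos (by positivity) _

lemma F_eq (x : ℝ) : F x = C * ∫ v in (-x)..x, gf v := by
  unfold F stdNormalCdf C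
  rw [← mul_sub]
  congr 1
  exact intervalIntegral.integral_Iic_sub_Iic gf_int.integrableOn gf_int.integrableOn

lemma F_zero : F 0 = 0 := by
  simp [F_eq]

lemma F_pos {x : ℝ} (hx : 0 < x) : 0 < F x := by
  rw [F_eq]
  refine mul_pos C_pos ?_
  exact intervalIntegral.intervalIntegral_pos_of_pos
    (gf_int.intervalIntegrable) gf_pos (by linarith)

lemma F_mono : Monotone F := by
  have e : ∀ u w : ℝ, (∫ v in u..w, gf v)
      = (∫ v in Set.Iic w, gf v) - ∫ v in Set.Iic u, gf v := fun u w =>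
    (intervalIntegral.integral_Iic_sub_Iic gf_int.integrableOn gf_int.integrableOn).symm
  intro a b hab
  rw [F_eq, F_eq]
  have h2 : 0 ≤ ∫ v in a..b, gf v :=
    intervalIntegral.integral_nonneg hab (fun v _ => (gf_pos v).le)
  have h3 : 0 ≤ ∫ v in (-b)..(-a), gf v :=
    intervalIntegral.integral_nonneg (by linarith) (fun v _ => (gf_pos v).le)
  have h1 : (∫ v in (-a)..a, gf v) ≤ ∫ v in (-b)..b, gf v := by
    simp only [e] at h2 h3 ⊢
    linarith
  exact mul_le_mul_of_nonneg_left h1 C_pos.le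

lemma F_hasDeriv : HasDerivAt F (2 * C) 0 := by
  have hH : HasDerivAt (fun u => ∫ v in (0:ℝ)..u, gf v) (gf 0) 0 :=
    intervalIntegral.integral_hasDerivAt_right (gf_int.intervalIntegrable)
      gf_cont.aestronglyMeasurable.stronglyMeasurableAtFilter gf_cont.continuousAt
  have hneg : HasDerivAt (fun u : ℝ => ∫ v in (0:ℝ)..(-u), gf v) (-gf 0) 0 := by
    have hH' : HasDerivAt (fun u => ∫ v in (0:ℝ)..u, gf v) (gf 0) (-0 : ℝ) := by
      rw [neg_zero]; exact hH
    have := hH'.comp (0:ℝ) (hasDerivAt_neg 0)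
    simpa [Function.comp_def] using this
  have hdiff : HasDerivAt (fun u : ℝ =>
      (∫ v in (0:ℝ)..u, gf v) - ∫ v in (0:ℝ)..(-u), gf v) (gf 0 - (-gf 0)) 0 :=
    hH.sub hneg
  have heq : F = fun u : ℝ =>
      C * ((∫ v in (0:ℝ)..u, gf v) - ∫ v in (0:ℝ)..(-u), gf v) := by
    funext u
    rw [F_eq]
    congr 1
    rw [← intervalIntegral.integral_add_adjacent_intervals
      (gf_int.intervalIntegrable) gf_int.intervalIntegrable,
      intervalIntegral.integral_symm]
    ring
  rw [heq]
  have := hdiff.const_mul C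
  have hg : gf 0 = 1 := by simp [gf]
  exact this.congr_deriv (by rw [hg]; ring)

/-- `2x / F x → √(2π)` as `x → 0+`. -/
lemma key_limit : Tendsto (fun x => 2 * x / F x) (𝓝[>] (0:ℝ)) (𝓝 (Real.sqrt (2 * Real.pi))) := by
  have hslope : Tendsto (slope F 0) (𝓝[≠] (0:ℝ)) (𝓝 (2 * C)) :=
    hasDerivAt_iff_tendsto_slope.mp F_hasDeriv
  have hslope' : Tendsto (slope F 0) (𝓝[>] (0:ℝ)) (𝓝 (2 * C)) :=
    hslope.mono_left (nhdsWithin_mono _ (fun x hx => ne_of_gt hx))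
  have h2C : (2 * C) ≠ 0 := by have := C_pos; positivity
  have hdiv : Tendsto (fun x => 2 / slope F 0 x) (𝓝[>] (0:ℝ)) (𝓝 (2 / (2 * C))) :=
    tendsto_const_nhds.div hslope' h2C
  have heq : ∀ᶠ x in 𝓝[>] (0:ℝ), 2 / slope F 0 x = 2 * x / F x := by
    filter_upwards [self_mem_nhdsWithin] with x hx
    have hx0 : (0:ℝ) < x := hx
    rw [slope_def_field, F_zero]
    field_simp
    rw [sub_zero, sub_zero]
  have hval : 2 / (2 * C) = Real.sqrt (2 * Real.pi) := by
    have hC : C * Real.sqrt (2 * Real.pi) = 1 := by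
      rw [Real.sqrt_eq_rpow]
      unfold C
      rw [← Real.rpow_add (by positivity)]
      norm_num
    rw [div_eq_iff h2C]
    linear_combination (-2 : ℝ) * hC
  rw [← hval]
  exact hdiv.congr' heq

end ATMaux

/-- At-the-money implied volatility asymptotics (Proposition 4.4): if the normalized
at-the-money Black–Scholes call price `c(t) = Φ(σ̂(t)√t/2) − Φ(−σ̂(t)√t/2)` satisfies
`c(t)/t^{1/Y} → A` as `t → 0+` (with `Y ∈ (1,2)`, `A > 0`), then
`σ̂(t) t^{1/2 − 1/Y} → √(2π) A`. -/
theorem atm_implied_volatility_asymptotics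
    (Y A t₀ : ℝ) (hY : Y ∈ Set.Ioo (1 : ℝ) 2) (hA : 0 < A) (ht₀ : 0 < t₀)
    (c σhat : ℝ → ℝ)
    (hpos : ∀ t, 0 < t → t < t₀ → 0 < c t ∧ 0 < σhat t)
    (hc : ∀ t, 0 < t → t < t₀ →
      c t = stdNormalCdf (σhat t * Real.sqrt t / 2)
        - stdNormalCdf (-(σhat t * Real.sqrt t / 2)))
    (hlim : Tendsto (fun t => c t / t ^ (1 / Y)) (𝓝[>] (0 : ℝ)) (𝓝 A)) :
    Tendsto (fun t => σhat t * t ^ (1 / 2 - 1 / Y)) (𝓝[>] (0 : ℝ))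
      (𝓝 (Real.sqrt (2 * Real.pi) * A)) := by
  obtain ⟨hY1, hY2⟩ := hY
  have hYpos : 0 < Y := by linarith
  have hppos : 0 < 1 / Y := by positivity
  set x : ℝ → ℝ := fun t => σhat t * Real.sqrt t / 2 with hxdef
  have hmem : Set.Ioo (0:ℝ) t₀ ∈ 𝓝[>] (0:ℝ) :=
    Ioo_mem_nhdsGT_of_mem ⟨le_refl 0, ht₀⟩
  have hFx : ∀ t ∈ Set.Ioo (0:ℝ) t₀, ATMaux.F (x t) = c t := fun t ht =>
    (hc t ht.1 ht.2).symm
  have hxpos : ∀ t ∈ Set.Ioo (0:ℝ) t₀, 0 < x t := by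
    intro t ht
    have h1 := (hpos t ht.1 ht.2).2
    have h2 := Real.sqrt_pos.mpr ht.1
    simp only [hxdef]
    positivity
  have hrp : Tendsto (fun t : ℝ => t ^ (1/Y)) (𝓝[>] (0:ℝ)) (𝓝 0) := by
    have hco : ContinuousAt (fun t : ℝ => t ^ (1/Y)) 0 :=
      Real.continuousAt_rpow_const 0 _ (Or.inr hppos.le)
    have h := hco.tendsto.mono_left (nhdsWithin_le_nhds (s := Set.Ioi (0:ℝ)))
    rwa [show ((0:ℝ) ^ (1/Y)) = 0 from Real.zero_rpow hppos.ne'] at h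
  have hc0 : Tendsto c (𝓝[>] (0:ℝ)) (𝓝 0) := by
    have h := hlim.mul hrp
    rw [mul_zero] at h
    refine h.congr' ?_
    filter_upwards [self_mem_nhdsWithin] with t ht
    have htp : (0:ℝ) < t := ht
    have : t ^ (1/Y) ≠ 0 := ne_of_gt (Real.rpow_pos_of_pos htp _)
    field_simp
  have hx0 : Tendsto x (𝓝[>] (0:ℝ)) (𝓝[>] (0:ℝ)) := by
    rw [tendsto_nhdsWithin_iff]
    constructor
    · rw [Metric.tendsto_nhds]
      intro ε hε
      have hFε := ATMaux.F_pos hε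
      filter_upwards [hc0.eventually_lt_const hFε, hmem] with t htl ht
      rw [Real.dist_eq, sub_zero, abs_of_pos (hxpos t ht)]
      by_contra h
      push_neg at h
      have h2 := ATMaux.F_mono h
      rw [hFx t ht] at h2
      linarith
    · filter_upwards [hmem] with t ht using hxpos t ht
  have hmain := (ATMaux.key_limit.comp hx0).mul hlim
  refine hmain.congr' ?_
  filter_upwards [hmem] with t ht
  have htp : 0 < t := ht.1
  have hct : 0 < c t := (hpos t ht.1 ht.2).1
  have htq : (0:ℝ) < t ^ (1/Y) := Real.rpow_pos_of_pos htp _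
  show 2 * x t / ATMaux.F (x t) * (c t / t ^ (1/Y)) = σhat t * t ^ (1/2 - 1/Y)
  rw [hFx t ht, Real.rpow_sub htp, ← Real.sqrt_eq_rpow]
  simp only [hxdef]
  field_simp
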